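/- The conditional Rényi entropy H̃_α(X|Z) = (1/(1-α)) log(∑_z p(z) ∑_x p(x|z)^α) is non-increasing in α on (1, ∞). -/

import Mathlib

/-- The conditional Rényi entropy `H̃_α(X|Z)` is non-increasing in `α` on `(1, ∞)`. -/
theorem cond_renyi_antitone {X Z : Type*} [Fintype X] [Fintype Z]
    (p : X → Z → ℝ)
    (hp : ∀ x z, 0 ≤ p x z) (hsum : ∑ x, ∑ z, p x z = 1)
    (hpos : ∀ z, 0 < ∑ x, p x z)
    (α₁ α₂ : ℝ) (h1 : 1 < α₁) (h12 : α₁ ≤ α₂) :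
    (1 / (1 - α₂)) *
        Real.log (∑ z, (∑ x', p x' z) * ∑ x, (p x z / (∑ x', p x' z)) ^ α₂)
      ≤ (1 / (1 - α₁)) *
        Real.log (∑ z, (∑ x', p x' z) * ∑ x, (p x z / (∑ x', p x' z)) ^ α₁) := by
  rcases isEmpty_or_nonempty Z with hZ | hZ
  · simp
  set t₁ := α₁ - 1 with hT1
  set t₂ := α₂ - 1 with hT2
  have ht₁ : 0 < t₁ := by rw [hT1]; linarith
  have ht₂ : 0 < t₂ := by rw [hT2]; linarith
  set q : X → Z → ℝ := fun x z => p x z / (∑ x', p x' z) with hq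
  have hq0 : ∀ x z, 0 ≤ q x z := fun x z => div_nonneg (hp x z) (hpos z).le
  -- rewrite each sum as a single sum over pairs
  have key : ∀ α : ℝ, 0 < α - 1 →
      (∑ z, (∑ x', p x' z) * ∑ x, (p x z / (∑ x', p x' z)) ^ α)
        = ∑ pr : X × Z, p pr.1 pr.2 * (q pr.1 pr.2) ^ (α - 1) := by
    intro α hα
    rw [Fintype.sum_prod_type, Finset.sum_comm]
    refine Finset.sum_congr rfl fun z _ => ?_
    rw [Finset.mul_sum]
    refine Finset.sum_congr rfl fun x _ => ?_
    rcases eq_or_lt_of_le (hp x z) with h0 | h0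
    · rw [hq]; simp only [← h0, zero_div,
        Real.zero_rpow (by linarith : α ≠ 0),
        Real.zero_rpow (ne_of_gt hα), mul_zero, zero_mul]
    · have hqpos : 0 < q x z := div_pos h0 (hpos z)
      have hs : (∑ x' : X, p x' z) ≠ 0 := (hpos z).ne'
      have hqs : q x z * (∑ x' : X, p x' z) = p x z := by
        rw [hq]; exact div_mul_cancel₀ _ hs
      rw [show α = (α - 1) + 1 by ring, Real.rpow_add hqpos, Real.rpow_one, ← hqs]
      ring
  have hw1 : ∑ pr : X × Z, p pr.1 pr.2 = 1 := by
    rw [Fintype.sum_prod_type]; exact hsum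
  set A := ∑ pr : X × Z, p pr.1 pr.2 * (q pr.1 pr.2) ^ t₁ with hA
  set B := ∑ pr : X × Z, p pr.1 pr.2 * (q pr.1 pr.2) ^ t₂ with hB
  set r := t₁ / t₂ with hr
  have hr0 : 0 < r := div_pos ht₁ ht₂
  have hr1 : r ≤ 1 := by
    rw [hr, div_le_one ht₂]; linarith
  -- positivity of A and B
  obtain ⟨z₀⟩ := hZ
  have hx₀ : ∃ x₀, 0 < p x₀ z₀ := by
    by_contra h
    push_neg at h
    have : ∑ x, p x z₀ ≤ 0 := Finset.sum_nonpos fun x _ => h x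
    linarith [hpos z₀]
  obtain ⟨x₀, hx₀⟩ := hx₀
  have hqx₀ : 0 < q x₀ z₀ := div_pos hx₀ (hpos z₀)
  have hA0 : 0 < A := by
    refine Finset.sum_pos' (fun pr _ => mul_nonneg (hp _ _) (Real.rpow_nonneg (hq0 _ _) _)) ?_
    exact ⟨(x₀, z₀), Finset.mem_univ _,
      mul_pos hx₀ (Real.rpow_pos_of_pos hqx₀ _)⟩
  have hB0 : 0 < B := by
    refine Finset.sum_pos' (fun pr _ => mul_nonneg (hp _ _) (Real.rpow_nonneg (hq0 _ _) _)) ?_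
    exact ⟨(x₀, z₀), Finset.mem_univ _,
      mul_pos hx₀ (Real.rpow_pos_of_pos hqx₀ _)⟩
  -- Jensen
  have jensen : A ≤ B ^ r := by
    have hc := (Real.concaveOn_rpow hr0.le hr1).le_map_sum
      (t := (Finset.univ : Finset (X × Z)))
      (w := fun pr : X × Z => p pr.1 pr.2)
      (p := fun pr : X × Z => (q pr.1 pr.2) ^ t₂)
      (fun pr _ => hp _ _) hw1
      (fun pr _ => Real.rpow_nonneg (hq0 _ _) _)
    simp only [smul_eq_mul] at hc
    calc A = ∑ pr : X × Z, p pr.1 pr.2 * ((q pr.1 pr.2) ^ t₂) ^ r := by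
            refine Finset.sum_congr rfl fun pr _ => ?_
            rw [show t₁ = t₂ * r by rw [hr]; field_simp, Real.rpow_mul (hq0 _ _)]
         _ ≤ B ^ r := hc
  have hlog : Real.log A ≤ r * Real.log B := by
    calc Real.log A ≤ Real.log (B ^ r) := Real.log_le_log hA0 jensen
      _ = r * Real.log B := Real.log_rpow hB0 r
  have hmul : Real.log A * t₂ ≤ Real.log B * t₁ := by
    have h2 := mul_le_mul_of_nonneg_right hlog ht₂.le
    have h3 : r * Real.log B * t₂ = Real.log B * t₁ := by
      rw [hr]; field_simp
    linarith
  rw [key α₁ (by linarith), key α₂ (by linarith), ← hA, ← hB,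
    show (1 : ℝ) - α₂ = -t₂ by rw [hT2]; ring,
    show (1 : ℝ) - α₁ = -t₁ by rw [hT1]; ring,
    div_neg, div_neg, neg_mul, neg_mul, neg_le_neg_iff,
    one_div_mul_eq_div, one_div_mul_eq_div, div_le_div_iff₀ ht₁ ht₂]
  exact hmul
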